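/- Let f : ℝ × ℝ → ℝ be continuous and 1-periodic in the time variable. Suppose the equation x' = f(t,x) admits a subharmonic solution of order m for some integer m > 1, i.e. there exist a solution x and an integer m ≥ 2 with x(t+m) = x(t) for all t ∈ ℝ and x(t₁+1) ≠ x(t₁) for some t₁ ∈ ℝ. Then for every integer n ≥ 1 there exists a solution xₙ of x' = f(t,x) with xₙ(t+n) = xₙ(t) for all t ∈ ℝ and such that no integer k with 1 ≤ k < n satisfies xₙ(t+k) = xₙ(t) for all t ∈ ℝ. -/

import Mathlib

/-- `x` is a (classical) solution of the ODE `x' = f(t,x)` on the whole real line. -/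
def IsSolution (f : ℝ × ℝ → ℝ) (x : ℝ → ℝ) : Prop :=
  ∀ t : ℝ, HasDerivAt x (f (t, x t)) t

namespace SubharmonicAux

variable {f : ℝ × ℝ → ℝ}

lemma fper_int (hper : ∀ t x : ℝ, f (t + 1, x) = f (t, x)) :
    ∀ (j : ℤ) (t v : ℝ), f (t + (j : ℝ), v) = f (t, v) := by
  intro j
  induction j using Int.induction_on with
  | zero => intro t v; norm_num
  | succ i ih =>
    intro t v
    have e1 : t + ((i : ℤ) + 1 : ℤ) = (t + (i : ℤ)) + 1 := by push_cast; ring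
    rw [e1, hper (t + ((i : ℤ) : ℝ)) v, ih t v]
  | pred i ih =>
    intro t v
    have h2 := hper (t + ((-(i : ℤ) - 1 : ℤ) : ℝ)) v
    have e1 : t + ((-(i : ℤ) - 1 : ℤ) : ℝ) + 1 = t + ((-(i : ℤ) : ℤ) : ℝ) := by
      push_cast; ring
    rw [e1] at h2
    rw [← h2, ih t v]

lemma sol_cont {x : ℝ → ℝ} (hx : IsSolution f x) : Continuous x :=
  continuous_iff_continuousAt.2 fun t => (hx t).differentiableAt.continuousAt

lemma sol_translate (hper : ∀ t x : ℝ, f (t + 1, x) = f (t, x)) {x : ℝ → ℝ}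
    (hx : IsSolution f x) (c : ℤ) : IsSolution f (fun s => x (s + (c : ℝ))) := by
  intro t
  have h1 := hx (t + (c : ℝ))
  have h2 : HasDerivAt (fun s : ℝ => x (s + (c : ℝ)))
      (f (t + (c : ℝ), x (t + (c : ℝ))) * 1) t :=
    h1.comp t ((hasDerivAt_id t).add_const (c : ℝ))
  rw [mul_one, fper_int hper c t (x (t + (c : ℝ)))] at h2
  exact h2

/-- The blockwise strand-switching construction: given a solution `x`, a base point `σ`
and integer translates `d k` on each block `[σ+k, σ+k+1]`, with matching junction values,
the glued function is again a solution. -/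
lemma blockwise (hper : ∀ t x : ℝ, f (t + 1, x) = f (t, x)) {x : ℝ → ℝ}
    (hx : IsSolution f x) (σ : ℝ) (d : ℤ → ℤ)
    (hj : ∀ k : ℤ, x (σ + (k : ℝ) + ((d (k - 1) : ℤ) : ℝ)) = x (σ + (k : ℝ) + ((d k : ℤ) : ℝ))) :
    IsSolution f (fun t => x (t + ((d ⌊t - σ⌋ : ℤ) : ℝ))) := by
  intro t
  set k : ℤ := ⌊t - σ⌋ with hk
  have hfl := Int.floor_le (t - σ)
  have hfl2 := Int.lt_floor_add_one (t - σ)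
  rw [← hk] at hfl hfl2
  have hk1 : σ + (k : ℝ) ≤ t := by linarith
  have hk2 : t < σ + (k : ℝ) + 1 := by linarith
  have htrans : ∀ c : ℤ, IsSolution f (fun s => x (s + (c : ℝ))) := sol_translate hper hx
  rcases eq_or_lt_of_le hk1 with heq | hlt
  · -- junction case : t = σ + k
    have hval : x (t + ((d (k - 1) : ℤ) : ℝ)) = x (t + ((d k : ℤ) : ℝ)) := by
      rw [← heq]; exact hj k
    have hR : HasDerivWithinAt (fun s => x (s + ((d ⌊s - σ⌋ : ℤ) : ℝ)))
        (f (t, x (t + ((d k : ℤ) : ℝ)))) (Set.Ici t) t := by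
      have h1 : HasDerivWithinAt (fun s => x (s + ((d k : ℤ) : ℝ)))
          (f (t, x (t + ((d k : ℤ) : ℝ)))) (Set.Ici t) t :=
        ((htrans (d k)) t).hasDerivWithinAt
      refine h1.congr_of_eventuallyEq ?_ ?_
      · have hmem : Set.Ico t (σ + (k : ℝ) + 1) ∈ nhdsWithin t (Set.Ici t) := by
          have : Set.Ico t (σ + (k : ℝ) + 1) = Set.Ici t ∩ Set.Iio (σ + (k : ℝ) + 1) :=
            (Set.Ici_inter_Iio).symm
          rw [this]
          exact Filter.inter_mem self_mem_nhdsWithin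
            (mem_nhdsWithin_of_mem_nhds (Iio_mem_nhds hk2))
        refine Filter.eventuallyEq_of_mem hmem (fun s hs => ?_)
        have hsk : ⌊s - σ⌋ = k := by
          rw [Int.floor_eq_iff]
          constructor
          · have : t ≤ s := hs.1
            linarith
          · have : s < σ + (k : ℝ) + 1 := hs.2
            push_cast; linarith
        simp only [hsk]
      · simp only [← hk]
    have hL : HasDerivWithinAt (fun s => x (s + ((d ⌊s - σ⌋ : ℤ) : ℝ)))
        (f (t, x (t + ((d k : ℤ) : ℝ)))) (Set.Iic t) t := by
      have h1 : HasDerivWithinAt (fun s => x (s + ((d (k - 1) : ℤ) : ℝ)))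
          (f (t, x (t + ((d (k - 1) : ℤ) : ℝ)))) (Set.Iic t) t :=
        ((htrans (d (k - 1))) t).hasDerivWithinAt
      rw [hval] at h1
      refine h1.congr_of_eventuallyEq ?_ ?_
      · have hmem : Set.Ioc (σ + (k : ℝ) - 1) t ∈ nhdsWithin t (Set.Iic t) := by
          have : Set.Ioc (σ + (k : ℝ) - 1) t = Set.Iic t ∩ Set.Ioi (σ + (k : ℝ) - 1) := by
            rw [Set.inter_comm, Set.Ioi_inter_Iic]
          rw [this]
          exact Filter.inter_mem self_mem_nhdsWithin
            (mem_nhdsWithin_of_mem_nhds (Ioi_mem_nhds (by linarith)))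
        refine Filter.eventuallyEq_of_mem hmem (fun s hs => ?_)
        rcases eq_or_lt_of_le hs.2 with hst | hst
        · -- s = t
          rw [hst]
          simp only [← hk]
          exact hval.symm
        · have hsk : ⌊s - σ⌋ = k - 1 := by
            rw [Int.floor_eq_iff]
            constructor
            · have : σ + (k : ℝ) - 1 < s := hs.1
              push_cast; linarith
            · have : s < t := hst
              push_cast; linarith
          simp only [hsk]
      · simp only [← hk]
        exact hval.symm
    have hU := hL.union hR
    rw [Set.Iic_union_Ici] at hU
    exact hasDerivWithinAt_univ.1 hU
  · -- interior case
    have hmem : Set.Ioo (σ + (k : ℝ)) (σ + (k : ℝ) + 1) ∈ nhds t := Ioo_mem_nhds hlt hk2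
    have hev : (fun s => x (s + ((d ⌊s - σ⌋ : ℤ) : ℝ)))
        =ᶠ[nhds t] (fun s => x (s + ((d k : ℤ) : ℝ))) := by
      refine Filter.eventuallyEq_of_mem hmem (fun s hs => ?_)
      have hsk : ⌊s - σ⌋ = k := by
        rw [Int.floor_eq_iff]
        constructor
        · have : σ + (k : ℝ) < s := hs.1
          linarith
        · have : s < σ + (k : ℝ) + 1 := hs.2
          push_cast; linarith
      simp only [hsk]
    have h1 : HasDerivAt (fun s => x (s + ((d k : ℤ) : ℝ)))
        (f (t, x (t + ((d k : ℤ) : ℝ)))) t := (htrans (d k)) t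
    exact h1.congr_of_eventuallyEq hev

/-- From a `p`-periodic non-1-periodic solution, produce a 2-periodic
non-1-periodic solution, by repeated descent. -/
lemma exists_per2 (hper : ∀ t x : ℝ, f (t + 1, x) = f (t, x)) :
    ∀ p : ℕ, 2 ≤ p → ∀ x : ℝ → ℝ, IsSolution f x → (∀ t, x (t + (p : ℝ)) = x t) →
    (∃ s, x (s + 1) ≠ x s) →
    ∃ u : ℝ → ℝ, IsSolution f u ∧ (∀ t, u (t + 2) = u t) ∧ ∃ s, u (s + 1) ≠ u s := by
  intro p
  induction p using Nat.strong_induction_on with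
  | _ p IH =>
  intro hp x hx hxp hw
  rcases eq_or_lt_of_le hp with h2 | h3
  · refine ⟨x, hx, ?_, hw⟩
    intro t
    have := hxp t
    rw [← h2] at this
    exact_mod_cast this
  · -- now 3 ≤ p
    have hp3 : 3 ≤ p := h3
    have hp3R : (3 : ℝ) ≤ (p : ℝ) := by exact_mod_cast hp3
    set G : ℝ → ℝ := fun t => x (t + 1) - x t with hG
    have hxc : Continuous x := sol_cont hx
    have hGc : Continuous G := by
      have h1 : Continuous fun t : ℝ => x (t + 1) :=
        hxc.comp (continuous_id.add continuous_const)
      exact h1.sub hxc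
    obtain ⟨s₀, hs₀⟩ := hw
    have hGs₀ : G s₀ ≠ 0 := sub_ne_zero.2 hs₀
    have hGp : ∀ t, G (t + (p : ℝ)) = G t := by
      intro t
      simp only [hG]
      rw [show t + (p : ℝ) + 1 = (t + 1) + (p : ℝ) by ring, hxp (t + 1), hxp t]
    have hsum : ∀ t : ℝ, ∑ i ∈ Finset.range p, G (t + (i : ℝ)) = 0 := by
      intro t
      have h := Finset.sum_range_sub (fun i : ℕ => x (t + (i : ℝ))) p
      have h2 : ∀ i ∈ Finset.range p,
          G (t + (i : ℝ)) = x (t + ((i + 1 : ℕ) : ℝ)) - x (t + (i : ℝ)) := by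
        intro i _
        simp only [hG]
        push_cast
        ring_nf
      rw [Finset.sum_congr rfl h2, h]
      have : x (t + ((0 : ℕ) : ℝ)) = x t := by norm_num
      rw [this, hxp t]
      ring
    -- existence of a "good" zero of G
    have hgood : ∃ τ : ℝ, G τ = 0 ∧ ∃ s : ℝ, τ + 1 ≤ s ∧ s ≤ τ + (p : ℝ) - 1 ∧ G s ≠ 0 := by
      by_contra hbad
      push_neg at hbad
      -- hbad : ∀ τ, G τ = 0 → ∀ s, τ+1 ≤ s → s ≤ τ + p − 1 → G s = 0
      have hzero : ∃ τ : ℝ, G τ = 0 := by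
        have hopp : ∃ i : ℕ, i < p ∧ (0 : ℝ) ∈ Set.uIcc (G s₀) (G (s₀ + (i : ℝ))) := by
          rcases lt_or_gt_of_ne hGs₀ with hneg | hpos
          · -- G s₀ < 0, find positive term
            by_contra hno
            push_neg at hno
            have hall : ∀ i ∈ Finset.range p, G (s₀ + (i : ℝ)) ≤ 0 := by
              intro i hi
              by_contra hgt
              push_neg at hgt
              exact (hno i (Finset.mem_range.1 hi))
                (Set.mem_uIcc.2 (Or.inl ⟨le_of_lt hneg, le_of_lt hgt⟩))
            have hall' : ∀ i ∈ Finset.range p, -G (s₀ + (i : ℝ)) ≥ 0 := fun i hi => by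
              have := hall i hi; linarith
            have hzsum : ∑ i ∈ Finset.range p, -G (s₀ + (i : ℝ)) = 0 := by
              rw [Finset.sum_neg_distrib, hsum s₀]; ring
            have := (Finset.sum_eq_zero_iff_of_nonneg hall').1 hzsum 0
              (Finset.mem_range.2 (by omega))
            simp only [Nat.cast_zero, add_zero] at this
            apply hGs₀
            linarith
          · by_contra hno
            push_neg at hno
            have hall : ∀ i ∈ Finset.range p, G (s₀ + (i : ℝ)) ≥ 0 := by
              intro i hi
              by_contra hgt
              push_neg at hgt
              exact (hno i (Finset.mem_range.1 hi))
                (Set.mem_uIcc.2 (Or.inr ⟨le_of_lt hgt, le_of_lt hpos⟩))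
            have := (Finset.sum_eq_zero_iff_of_nonneg hall).1 (hsum s₀) 0
              (Finset.mem_range.2 (by omega))
            simp only [Nat.cast_zero, add_zero] at this
            exact hGs₀ this
        obtain ⟨i, _, h0i⟩ := hopp
        obtain ⟨τ, _, hτ⟩ := intermediate_value_uIcc
          (a := s₀) (b := s₀ + (i : ℝ)) hGc.continuousOn h0i
        exact ⟨τ, hτ⟩
      obtain ⟨τ, hτ⟩ := hzero
      -- propagation
      have prop : ∀ j : ℕ, ∀ r : ℝ, τ + 1 ≤ r →
          r ≤ τ + ((p : ℝ) - 1) + (j : ℝ) * ((p : ℝ) - 2) → G r = 0 := by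
        intro j
        induction j with
        | zero =>
          intro r h1 h2
          exact hbad τ hτ r h1 (by push_cast at h2; linarith)
        | succ j ihj =>
          intro r h1 h2
          by_cases hc : r ≤ τ + ((p : ℝ) - 1) + (j : ℝ) * ((p : ℝ) - 2)
          · exact ihj r h1 hc
          push_neg at hc
          have hjnn : (0 : ℝ) ≤ (j : ℝ) * ((p : ℝ) - 2) := by
            apply mul_nonneg (Nat.cast_nonneg j); linarith
          set s := r - ((p : ℝ) - 2) with hsdef
          have hs1 : τ + 1 ≤ s := by
            simp only [hsdef]; linarith
          have hs2 : s ≤ τ + ((p : ℝ) - 1) + (j : ℝ) * ((p : ℝ) - 2) := by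
            simp only [hsdef]
            push_cast at h2
            linarith
          have hGs := ihj s hs1 hs2
          exact hbad s hGs r (by simp only [hsdef]; linarith) (by simp only [hsdef]; linarith)
      -- contradiction with G s₀ ≠ 0
      have hGrep : ∀ N : ℕ, G (s₀ + (N : ℝ) * (p : ℝ)) = G s₀ := by
        intro N
        induction N with
        | zero => norm_num
        | succ N ihN =>
          rw [show s₀ + ((N + 1 : ℕ) : ℝ) * (p : ℝ) = (s₀ + (N : ℝ) * (p : ℝ)) + (p : ℝ) by
            push_cast; ring]
          rw [hGp, ihN]
      obtain ⟨N, hN⟩ := exists_nat_ge (τ + 1 - s₀)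
      set r := s₀ + (N : ℝ) * (p : ℝ) with hrdef
      have hr1 : τ + 1 ≤ r := by
        have hNp : (N : ℝ) ≤ (N : ℝ) * (p : ℝ) := by
          nlinarith [Nat.cast_nonneg (α := ℝ) N]
        simp only [hrdef]; linarith
      obtain ⟨j, hj⟩ := exists_nat_ge (r - τ - ((p : ℝ) - 1))
      have hr2 : r ≤ τ + ((p : ℝ) - 1) + (j : ℝ) * ((p : ℝ) - 2) := by
        have hjj : (j : ℝ) ≤ (j : ℝ) * ((p : ℝ) - 2) := by
          nlinarith [Nat.cast_nonneg (α := ℝ) j]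
        linarith
      have := prop j r hr1 hr2
      rw [hGrep N] at this
      exact hGs₀ this
    obtain ⟨τ₀, hτ₀, sw, hsw1, hsw2, hsw3⟩ := hgood
    -- glue x over the window [τ₀+1, τ₀+p] of length p−1
    set σ' : ℝ := τ₀ + 1 with hσ'
    set q : ℤ := (p : ℤ) - 1 with hq
    have hpz : (3 : ℤ) ≤ (p : ℤ) := by exact_mod_cast hp3
    have hq2 : (2 : ℤ) ≤ q := by omega
    have hq0 : (0 : ℤ) < q := by omega
    have h1q : (1 : ℤ) % q = 1 := Int.emod_eq_of_lt (by norm_num) (by omega)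
    have hqR : ((q : ℤ) : ℝ) = (p : ℝ) - 1 := by simp only [hq]; push_cast; ring
    have hx1 : x (τ₀ + 1) = x τ₀ := by
      have : x (τ₀ + 1) - x τ₀ = 0 := hτ₀
      linarith
    have hwrap : x (σ' + ((q : ℤ) : ℝ)) = x σ' := by
      rw [hqR, hσ']
      rw [show τ₀ + 1 + ((p : ℝ) - 1) = τ₀ + (p : ℝ) by ring, hxp τ₀, hx1]
    set d : ℤ → ℤ := fun k => k % q - k with hd
    have hmodsub : ∀ k : ℤ, k % q ≠ 0 → (k - 1) % q = k % q - 1 := by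
      intro k hk
      have hge : 1 ≤ k % q := by
        have := Int.emod_nonneg k (by omega : q ≠ 0)
        omega
      have hlt : k % q < q := Int.emod_lt_of_pos k hq0
      rw [Int.sub_emod k 1 q, h1q]
      exact Int.emod_eq_of_lt (by omega) (by omega)
    have hmodzero : ∀ k : ℤ, k % q = 0 → (k - 1) % q = q - 1 := by
      intro k hk
      rw [Int.sub_emod k 1 q, hk, h1q]
      rw [show ((0 : ℤ) - 1) = -1 by ring]
      have e3 : (-1 : ℤ) % q = (q - 1) % q := by
        rw [show (q - 1 : ℤ) = -1 + q * 1 by ring]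
        exact (Int.add_mul_emod_self_left (-1) q 1).symm
      rw [e3]
      exact Int.emod_eq_of_lt (by omega) (by omega)
    have hjunc : ∀ k : ℤ, x (σ' + (k : ℝ) + ((d (k - 1) : ℤ) : ℝ))
        = x (σ' + (k : ℝ) + ((d k : ℤ) : ℝ)) := by
      intro k
      have harg1 : σ' + (k : ℝ) + ((d (k - 1) : ℤ) : ℝ)
          = σ' + (((k - 1) % q : ℤ) : ℝ) + 1 := by
        simp only [hd]; push_cast; ring
      have harg2 : σ' + (k : ℝ) + ((d k : ℤ) : ℝ) = σ' + ((k % q : ℤ) : ℝ) := by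
        simp only [hd]; push_cast; ring
      rw [harg1, harg2]
      by_cases hk0 : k % q = 0
      · rw [hmodzero k hk0, hk0]
        rw [show σ' + (((q - 1 : ℤ) : ℤ) : ℝ) + 1 = σ' + ((q : ℤ) : ℝ) by push_cast; ring]
        rw [hwrap]
        norm_num
      · rw [hmodsub k hk0]
        congr 1
        push_cast
        ring
    set u : ℝ → ℝ := fun t => x (t + ((d ⌊t - σ'⌋ : ℤ) : ℝ)) with hu
    have husol : IsSolution f u := blockwise hper hx σ' d hjunc
    -- u is (p-1)-periodic
    have huper : ∀ t, u (t + ((q : ℤ) : ℝ)) = u t := by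
      intro t
      simp only [hu]
      have hfl : ⌊t + ((q : ℤ) : ℝ) - σ'⌋ = ⌊t - σ'⌋ + q := by
        rw [show t + ((q : ℤ) : ℝ) - σ' = (t - σ') + ((q : ℤ) : ℝ) by ring, Int.floor_add_intCast]
      rw [hfl]
      have hdq : d (⌊t - σ'⌋ + q) = d ⌊t - σ'⌋ - q := by
        simp only [hd]
        have : (⌊t - σ'⌋ + q) % q = ⌊t - σ'⌋ % q := by
          rw [show ⌊t - σ'⌋ + q = ⌊t - σ'⌋ + q * 1 by ring]
          exact Int.add_mul_emod_self_left _ _ _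
        rw [this]; ring
      rw [hdq]
      congr 1
      push_cast
      ring
    -- u agrees with x on [σ', σ'+q]
    have hux : ∀ t, σ' ≤ t → t ≤ σ' + ((q : ℤ) : ℝ) → u t = x t := by
      intro t h1 h2
      simp only [hu]
      have hk0 : (0 : ℤ) ≤ ⌊t - σ'⌋ := by
        apply Int.le_floor.2
        push_cast
        linarith
      have hkq : ⌊t - σ'⌋ ≤ q := by
        have : (⌊t - σ'⌋ : ℝ) ≤ t - σ' := Int.floor_le (t - σ')
        have h3 : (⌊t - σ'⌋ : ℝ) ≤ ((q : ℤ) : ℝ) := by linarith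
        exact_mod_cast h3
      rcases eq_or_lt_of_le hkq with hkectop | hklt
      · -- ⌊t−σ'⌋ = q, so t = σ' + q
        have hge : ((q : ℤ) : ℝ) ≤ t - σ' := by
          rw [← hkectop]
          exact Int.floor_le (t - σ')
        have ht : t = σ' + ((q : ℤ) : ℝ) := le_antisymm h2 (by linarith)
        rw [hkectop, ht]
        have : d q = -q := by simp only [hd]; rw [Int.emod_self]; ring
        rw [this]
        rw [show σ' + ((q : ℤ) : ℝ) + ((-q : ℤ) : ℝ) = σ' by push_cast; ring]
        exact hwrap.symm
      · have : ⌊t - σ'⌋ % q = ⌊t - σ'⌋ := Int.emod_eq_of_lt hk0 hklt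
        have hd0 : d ⌊t - σ'⌋ = 0 := by simp only [hd]; omega
        rw [hd0]
        norm_num
    -- witness that u is not 1-periodic
    have hsw1' : σ' ≤ sw := by rw [hσ']; linarith
    have hswub : sw ≤ σ' + ((q : ℤ) : ℝ) - 1 := by rw [hσ', hqR]; linarith
    have huw : u (sw + 1) ≠ u sw := by
      rw [hux sw hsw1' (by linarith), hux (sw + 1) (by linarith) (by linarith)]
      exact fun h => hsw3 (by simp only [hG]; rw [h]; ring)
    -- apply induction hypothesis at p − 1
    have hcast : ((p - 1 : ℕ) : ℝ) = ((q : ℤ) : ℝ) := by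
      rw [hqR]
      push_cast [Nat.cast_sub (by omega : 1 ≤ p)]
      ring
    refine IH (p - 1) (by omega) (by omega) u husol (fun t => ?_) ⟨sw, huw⟩
    rw [hcast]
    exact huper t

end SubharmonicAux

open SubharmonicAux

theorem subharmonic_implies_all_periods
    (f : ℝ × ℝ → ℝ) (hf : Continuous f)
    (hper : ∀ t x : ℝ, f (t + 1, x) = f (t, x))
    (x : ℝ → ℝ) (m : ℕ) (hm : 2 ≤ m)
    (hx : IsSolution f x)
    (hxm : ∀ t : ℝ, x (t + m) = x t)
    (t₁ : ℝ) (ht₁ : x (t₁ + 1) ≠ x t₁) :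
    ∀ n : ℕ, 1 ≤ n → ∃ xn : ℝ → ℝ, IsSolution f xn ∧
      (∀ t : ℝ, xn (t + n) = xn t) ∧
      ∀ k : ℕ, 1 ≤ k → k < n → ¬ (∀ t : ℝ, xn (t + k) = xn t) := by
  obtain ⟨u, hu, hu2, s₀, hs₀⟩ := exists_per2 hper m hm x hx hxm ⟨t₁, ht₁⟩
  intro n hn
  set Gu : ℝ → ℝ := fun t => u (t + 1) - u t with hGu
  have huc : Continuous u := sol_cont hu
  have hGuc : Continuous Gu := by
    have h1 : Continuous fun t : ℝ => u (t + 1) :=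
      huc.comp (continuous_id.add continuous_const)
    exact h1.sub huc
  have hanti : ∀ t, Gu (t + 1) = - Gu t := by
    intro t
    simp only [hGu]
    rw [show t + 1 + 1 = t + 2 by ring, hu2 t]
    ring
  have hGus₀ : Gu s₀ ≠ 0 := sub_ne_zero.2 hs₀
  -- find the first zero of Gu at or after s₀
  have h0mem : (0 : ℝ) ∈ Set.uIcc (Gu s₀) (Gu (s₀ + 1)) := by
    rw [hanti s₀]
    rcases le_total (Gu s₀) 0 with h | h
    · exact Set.mem_uIcc.2 (Or.inl ⟨h, by linarith⟩)
    · exact Set.mem_uIcc.2 (Or.inr ⟨by linarith, h⟩)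
  obtain ⟨τ, hτmem, hτ0⟩ := intermediate_value_uIcc
    (a := s₀) (b := s₀ + 1) hGuc.continuousOn h0mem
  have hτIcc : τ ∈ Set.Icc s₀ (s₀ + 1) := by
    rwa [Set.uIcc_of_le (by linarith : s₀ ≤ s₀ + 1)] at hτmem
  set S : Set ℝ := Set.Icc s₀ (s₀ + 1) ∩ {s | Gu s = 0} with hS
  have hSne : S.Nonempty := ⟨τ, hτIcc, hτ0⟩
  have hSc : IsClosed S := isClosed_Icc.inter (isClosed_eq hGuc continuous_const)
  have hSbdd : BddBelow S := ⟨s₀, fun y hy => hy.1.1⟩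
  set σ : ℝ := sInf S with hσdef
  have hσS : σ ∈ S := hSc.csInf_mem hSne hSbdd
  have hσ0 : Gu σ = 0 := hσS.2
  have hσu1 : u (σ + 1) = u σ := by
    have : u (σ + 1) - u σ = 0 := hσ0
    linarith
  have hσgt : s₀ < σ := by
    rcases eq_or_lt_of_le hσS.1.1 with h | h
    · exfalso; apply hGus₀; rw [h]; exact hσ0
    · exact h
  have hmin : ∀ s, s₀ ≤ s → s < σ → Gu s ≠ 0 := by
    intro s h1 h2 h3
    have hsS : s ∈ S := ⟨⟨h1, by have := hσS.1.2; linarith⟩, h3⟩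
    exact absurd (csInf_le hSbdd hsS) (not_le.2 h2)
  -- the strand pattern
  set e : ℤ → ℤ := fun k => if k % (n : ℤ) = 1 then 1 else 0 with he
  set d : ℤ → ℤ := fun k => e k - k with hd
  have hnz : (1 : ℤ) ≤ (n : ℤ) := by exact_mod_cast hn
  have hjunc : ∀ k : ℤ, u (σ + (k : ℝ) + ((d (k - 1) : ℤ) : ℝ))
      = u (σ + (k : ℝ) + ((d k : ℤ) : ℝ)) := by
    intro k
    have harg1 : σ + (k : ℝ) + ((d (k - 1) : ℤ) : ℝ) = σ + ((e (k - 1) : ℤ) : ℝ) + 1 := by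
      simp only [hd]; push_cast; ring
    have harg2 : σ + (k : ℝ) + ((d k : ℤ) : ℝ) = σ + ((e k : ℤ) : ℝ) := by
      simp only [hd]; push_cast; ring
    rw [harg1, harg2]
    by_cases h1 : k % (n : ℤ) = 1
    · -- e k = 1, e (k-1) = 0
      have hn2 : (2 : ℤ) ≤ (n : ℤ) := by
        rcases eq_or_lt_of_le hnz with hh | hh
        · exfalso
          rw [← hh, Int.emod_one] at h1
          norm_num at h1
        · omega
      have h1n : (1 : ℤ) % (n : ℤ) = 1 := Int.emod_eq_of_lt (by norm_num) (by omega)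
      have hk1 : (k - 1) % (n : ℤ) = 0 := by
        rw [Int.sub_emod k 1 (n : ℤ), h1, h1n]
        norm_num
      have he1 : e k = 1 := by simp only [he, if_pos h1]
      have he0 : e (k - 1) = 0 := by
        simp only [he, hk1]
        norm_num
      rw [he1, he0]
      norm_num
    · have he0 : e k = 0 := by simp only [he, if_neg h1]
      rw [he0]
      by_cases h2 : (k - 1) % (n : ℤ) = 1
      · have he1 : e (k - 1) = 1 := by simp only [he, if_pos h2]
        rw [he1]
        rw [show σ + ((1 : ℤ) : ℝ) + 1 = σ + 2 by push_cast; ring]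
        rw [show σ + ((0 : ℤ) : ℝ) = σ by push_cast; ring]
        exact hu2 σ
      · have he1 : e (k - 1) = 0 := by simp only [he, if_neg h2]
        rw [he1]
        rw [show σ + ((0 : ℤ) : ℝ) + 1 = σ + 1 by push_cast; ring]
        rw [show σ + ((0 : ℤ) : ℝ) = σ by push_cast; ring]
        exact hσu1
  refine ⟨fun t => u (t + ((d ⌊t - σ⌋ : ℤ) : ℝ)), blockwise hper hu σ d hjunc, ?_, ?_⟩
  · -- n-periodicity
    intro t
    have hfl : ⌊t + (n : ℝ) - σ⌋ = ⌊t - σ⌋ + (n : ℤ) := by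
      rw [show t + (n : ℝ) - σ = (t - σ) + (((n : ℤ) : ℤ) : ℝ) by push_cast; ring,
        Int.floor_add_intCast]
    simp only
    rw [hfl]
    have hde : d (⌊t - σ⌋ + (n : ℤ)) = d ⌊t - σ⌋ - (n : ℤ) := by
      simp only [hd, he]
      have hmod : (⌊t - σ⌋ + (n : ℤ)) % (n : ℤ) = ⌊t - σ⌋ % (n : ℤ) := by
        rw [show ⌊t - σ⌋ + (n : ℤ) = ⌊t - σ⌋ + (n : ℤ) * 1 by ring]
        exact Int.add_mul_emod_self_left _ _ _
      rw [hmod]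
      ring
    rw [hde]
    congr 1
    push_cast
    ring
  · -- no smaller integer period
    intro k hk1 hkn hall
    have hn2 : 2 ≤ n := by omega
    have hn2z : (2 : ℤ) ≤ (n : ℤ) := by exact_mod_cast hn2
    set ε : ℝ := min (σ - s₀) (1 / 2) with hεdef
    have hε0 : 0 < ε := lt_min (by linarith) (by norm_num)
    have hε2 : ε ≤ 1 / 2 := min_le_right _ _
    have hεσ : ε ≤ σ - s₀ := min_le_left _ _
    set t : ℝ := σ + 2 - ε with htdef
    have hfl1 : ⌊t - σ⌋ = 1 := by
      rw [Int.floor_eq_iff]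
      constructor
      · push_cast; simp only [htdef]; linarith
      · push_cast; simp only [htdef]; linarith
    have hfl2 : ⌊t + (k : ℝ) - σ⌋ = (k : ℤ) + 1 := by
      rw [Int.floor_eq_iff]
      constructor
      · push_cast; simp only [htdef]; linarith
      · push_cast; simp only [htdef]; linarith
    have he1 : e 1 = 1 := by
      have : (1 : ℤ) % (n : ℤ) = 1 := Int.emod_eq_of_lt (by norm_num) (by omega)
      simp only [he, if_pos this]
    have hek : e ((k : ℤ) + 1) = 0 := by
      have hkz : (1 : ℤ) ≤ (k : ℤ) := by exact_mod_cast hk1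
      have hknz : (k : ℤ) + 1 ≤ (n : ℤ) := by exact_mod_cast hkn
      have hne : ((k : ℤ) + 1) % (n : ℤ) ≠ 1 := by
        rcases eq_or_lt_of_le hknz with heq | hlt
        · rw [heq, Int.emod_self]; omega
        · rw [Int.emod_eq_of_lt (by omega) hlt]; omega
      simp only [he, if_neg hne]
    have hxt : u (t + ((d ⌊t - σ⌋ : ℤ) : ℝ)) = u t := by
      rw [hfl1]
      have : d 1 = 0 := by simp only [hd, he1]; ring
      rw [this]
      norm_num
    have hxtk : u (t + (k : ℝ) + ((d ⌊t + (k : ℝ) - σ⌋ : ℤ) : ℝ)) = u (t - 1) := by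
      rw [hfl2]
      have : d ((k : ℤ) + 1) = -((k : ℤ) + 1) := by simp only [hd, hek]; ring
      rw [this]
      congr 1
      push_cast
      ring
    have hcall := hall t
    simp only at hcall
    rw [hxtk, hxt] at hcall
    -- hcall : u (t - 1) = u t
    have hGut : Gu (t - 1) = 0 := by
      simp only [hGu]
      rw [show t - 1 + 1 = t by ring, hcall]
      ring
    have h1 : t - 1 = (σ - ε) + 1 := by simp only [htdef]; ring
    have h2 : Gu ((σ - ε) + 1) = - Gu (σ - ε) := hanti _
    have h3 : Gu (σ - ε) ≠ 0 := hmin (σ - ε) (by linarith) (by linarith)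
    rw [h1, h2] at hGut
    exact h3 (by linarith)
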